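/- Let X and Y be Hausdorff topological spaces and f : X → Y a continuous surjective map with finite fibres (f⁻¹(y) is finite for every y ∈ Y). Then the Cantor-Bendixson rank of Y is at least the Cantor-Bendixson rank of X. -/

import Mathlib

open Filter

/-- The `o`-th Cantor–Bendixson derivative of the space `X`: at successors remove isolated
points (keep only accumulation points), at limits take intersections. -/
noncomputable def cbDeriv (X : Type*) [TopologicalSpace X] (o : Ordinal) : Set X :=
  Ordinal.limitRecOn o Set.univ
    (fun _ s => {x | x ∈ s ∧ AccPt x (𝓟 s)})
    (fun o _ ih => ⋂ (o' : Ordinal) (h : o' < o), ih o' h)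

lemma cbDeriv_zero (X : Type*) [TopologicalSpace X] : cbDeriv X 0 = Set.univ :=
  Ordinal.limitRecOn_zero ..

lemma cbDeriv_succ (X : Type*) [TopologicalSpace X] (o : Ordinal) :
    cbDeriv X (Order.succ o) = {x | x ∈ cbDeriv X o ∧ AccPt x (𝓟 (cbDeriv X o))} :=
  Ordinal.limitRecOn_succ ..

lemma cbDeriv_limit (X : Type*) [TopologicalSpace X] {o : Ordinal} (ho : Order.IsSuccLimit o) :
    cbDeriv X o = ⋂ (o' : Ordinal) (_ : o' < o), cbDeriv X o' :=
  Ordinal.limitRecOn_limit _ _ _ _ ho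

lemma acc_image {X Y : Type*} [TopologicalSpace X] [TopologicalSpace Y] [T2Space X]
    {f : X → Y} (hcont : Continuous f) {x : X} (hfin : (f ⁻¹' {f x}).Finite)
    {S : Set X} (h : AccPt x (𝓟 S)) : AccPt (f x) (𝓟 (f '' S)) := by
  rw [accPt_iff_nhds] at h ⊢
  intro V hV
  have hFcl : IsClosed (f ⁻¹' {f x} \ {x}) := (hfin.subset Set.diff_subset).isClosed
  have hU : (f ⁻¹' {f x} \ {x})ᶜ ∈ nhds x := by
    refine hFcl.isOpen_compl.mem_nhds ?_
    simp
  obtain ⟨y, ⟨⟨hyV, hyU⟩, hyS⟩, hyx⟩ := h (f ⁻¹' V ∩ (f ⁻¹' {f x} \ {x})ᶜ)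
    (Filter.inter_mem (hcont.continuousAt.preimage_mem_nhds hV) hU)
  refine ⟨f y, ⟨hyV, ⟨y, hyS, rfl⟩⟩, ?_⟩
  intro hfy
  exact hyU ⟨hfy, hyx⟩

/-- If `f : X → Y` is continuous, onto, with finite fibres, the Cantor–Bendixson rank of `Y` is
at least that of `X`: whenever the `o`-th derivative of `X` is nonempty, so is that of `Y`. -/
theorem stmt_7 {X Y : Type*} [TopologicalSpace X] [TopologicalSpace Y]
    [T2Space X] [T2Space Y] (f : X → Y) (hcont : Continuous f)
    (hsurj : Function.Surjective f) (hfin : ∀ y : Y, (f ⁻¹' {y}).Finite) :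
    ∀ o : Ordinal, (cbDeriv X o).Nonempty → (cbDeriv Y o).Nonempty := by
  have key : ∀ o : Ordinal, f '' cbDeriv X o ⊆ cbDeriv Y o := by
    intro o
    induction o using Ordinal.limitRecOn with
    | zero => simp [cbDeriv_zero]
    | add_one o ih =>
        rw [Ordinal.add_one_eq_succ, cbDeriv_succ, cbDeriv_succ]
        rintro _ ⟨x, ⟨hx, hacc⟩, rfl⟩
        refine ⟨ih ⟨x, hx, rfl⟩, ?_⟩
        have := acc_image hcont (hfin (f x)) hacc
        exact this.mono (principal_mono.2 (Set.image_subset_iff.mpr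
          (fun z hz => ih ⟨z, hz, rfl⟩)))
    | limit o ho ih =>
        rw [cbDeriv_limit X ho, cbDeriv_limit Y ho]
        rintro _ ⟨x, hx, rfl⟩
        simp only [Set.mem_iInter] at hx ⊢
        exact fun o' h => ih o' h ⟨x, hx o' h, rfl⟩
  intro o ⟨x, hx⟩
  exact ⟨f x, key o ⟨x, hx, rfl⟩⟩
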